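/- arXiv:1901.09576 — 2 statements merged into one kernel-verified Lean document; each statement's English description precedes it below -/
import Mathlib

section
/- Let ℬ be a Banach space and f : [0,∞) → ℬ a C² function such that there exist a ≥ 0 and M > 0 with ‖f(t)‖ ≤ M e^{at}, ‖f′(t)‖ ≤ M e^{at}, ‖f″(t)‖ ≤ M e^{at} for all t ≥ 0. Then for every x > a, ∫₀^∞ e^{−tx} (sin(Rt)/t) f(t) dt → (π/2) f(0) as R → +∞. -/
open MeasureTheory

section SincAux
open Real Set Filter

lemma sinc_integrableOn {x : ℝ} (hx : 0 < x) (R : ℝ) :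
    IntegrableOn (fun t : ℝ => Real.exp (-t * x) * (Real.sin (R * t) / t)) (Ioi 0) := by
  refine ((exp_neg_integrableOn_Ioi 0 hx).const_mul |R|).mono' ?_ ?_
  · refine (ContinuousOn.mul (by fun_prop) ?_).aestronglyMeasurable measurableSet_Ioi
    exact (Real.continuous_sin.comp (continuous_const.mul continuous_id)).continuousOn.div
      continuousOn_id (fun t ht => ne_of_gt ht)
  · rw [ae_restrict_iff' measurableSet_Ioi]
    refine Eventually.of_forall fun t ht => ?_
    have ht0 : (0:ℝ) < t := ht
    have h1 : |Real.sin (R * t) / t| ≤ |R| := by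
      rw [abs_div, abs_of_pos ht0, div_le_iff₀ ht0]
      calc |Real.sin (R * t)| ≤ |R * t| := Real.abs_sin_le_abs
        _ = |R| * t := by rw [abs_mul, abs_of_pos ht0]
    have hn : ‖Real.exp (-t * x) * (Real.sin (R * t) / t)‖
        = Real.exp (-t*x) * |Real.sin (R*t)/t| := by
      rw [norm_mul, Real.norm_eq_abs, Real.norm_eq_abs, Real.abs_exp]
    rw [hn, mul_comm (|R|), show (-t*x) = (-x*t) by ring]
    exact mul_le_mul_of_nonneg_left h1 (Real.exp_pos _).le

lemma expcos_integrableOn {x : ℝ} (hx : 0 < x) (R : ℝ) :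
    IntegrableOn (fun t : ℝ => Real.exp (-t * x) * Real.cos (R * t)) (Ioi 0) := by
  refine (exp_neg_integrableOn_Ioi 0 hx).mono' ?_ ?_
  · exact (Continuous.aestronglyMeasurable (by fun_prop)).restrict
  · refine Eventually.of_forall fun t => ?_
    have : ‖Real.exp (-t * x) * Real.cos (R * t)‖ = Real.exp (-t*x) * |Real.cos (R*t)| := by
      rw [norm_mul, Real.norm_eq_abs, Real.norm_eq_abs, Real.abs_exp]
    rw [this, show (-t*x) = (-x*t) by ring]
    calc Real.exp (-x*t) * |Real.cos (R*t)| ≤ Real.exp (-x*t) * 1 :=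
      mul_le_mul_of_nonneg_left (Real.abs_cos_le_one _) (Real.exp_pos _).le
    _ = Real.exp (-x*t) := mul_one _

lemma expcos_integral {x : ℝ} (hx : 0 < x) (R : ℝ) :
    ∫ t in Ioi (0:ℝ), Real.exp (-t * x) * Real.cos (R * t) = x / (x^2 + R^2) := by
  have hD : (0:ℝ) < x^2 + R^2 := by positivity
  set G : ℝ → ℝ := fun t =>
    Real.exp (-t * x) * ((R * Real.sin (R * t) - x * Real.cos (R * t)) / (x^2 + R^2)) with hGdef
  have hG : ∀ t : ℝ, HasDerivAt G (Real.exp (-t * x) * Real.cos (R * t)) t := by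
    intro t
    have he : HasDerivAt (fun t : ℝ => Real.exp (-t * x)) (-x * Real.exp (-t * x)) t := by
      have h0 : HasDerivAt (fun t : ℝ => -t * x) (-x) t := by
        simpa using ((hasDerivAt_id t).neg.mul_const x)
      simpa [mul_comm] using h0.exp
    have hs : HasDerivAt (fun t : ℝ => R * Real.sin (R * t) - x * Real.cos (R * t))
        (R * (Real.cos (R * t) * R) - x * (-Real.sin (R * t) * R)) t := by
      have hRt : HasDerivAt (fun t : ℝ => R * t) R t := by
        simpa using (hasDerivAt_id t).const_mul R
      exact ((hRt.sin).const_mul R).sub ((hRt.cos).const_mul x)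
    have h := (he.mul (hs.div_const (x^2 + R^2)))
    refine h.congr_deriv ?_
    field_simp
    ring
  have htend : Tendsto G atTop (nhds 0) := by
    have h1 : Tendsto (fun t : ℝ => ((|R| + x) / (x^2 + R^2)) * Real.exp (-x * t)) atTop
        (nhds 0) := by
      have : Tendsto (fun t : ℝ => Real.exp (-(x * t))) atTop (nhds 0) :=
        Real.tendsto_exp_neg_atTop_nhds_zero.comp (tendsto_id.const_mul_atTop hx)
      simpa [neg_mul] using this.const_mul ((|R| + x) / (x^2 + R^2))
    refine squeeze_zero_norm (fun t => ?_) h1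
    have : ‖G t‖ = Real.exp (-t*x) * (|R * Real.sin (R*t) - x * Real.cos (R*t)| / (x^2+R^2)) := by
      rw [hGdef]
      rw [Real.norm_eq_abs, abs_mul, Real.abs_exp, abs_div, abs_of_pos hD]
    rw [this, show (-t*x) = (-x*t) by ring, mul_comm ((|R| + x) / (x^2 + R^2))]
    refine mul_le_mul_of_nonneg_left ?_ (Real.exp_pos _).le
    gcongr
    calc |R * Real.sin (R*t) - x * Real.cos (R*t)|
        ≤ |R * Real.sin (R*t)| + |x * Real.cos (R*t)| := abs_sub _ _
      _ ≤ |R| * 1 + |x| * 1 := by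
          rw [abs_mul, abs_mul]
          gcongr
          · exact Real.abs_sin_le_one _
          · exact Real.abs_cos_le_one _
      _ = |R| + x := by rw [mul_one, mul_one, abs_of_pos hx]
  have := integral_Ioi_of_hasDerivAt_of_tendsto' (f := G)
    (fun t _ => hG t) (expcos_integrableOn hx R) htend
  rw [this, hGdef]
  simp [Real.exp_zero]
  ring

lemma F_hasDerivAt {x : ℝ} (hx : 0 < x) (R : ℝ) :
    HasDerivAt (fun r : ℝ => ∫ t in Ioi (0:ℝ), Real.exp (-t * x) * (Real.sin (r * t) / t))
      (x / (x^2 + R^2)) R := by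
  have key := hasDerivAt_integral_of_dominated_loc_of_deriv_le (μ := volume.restrict (Ioi 0))
    (F := fun r t => Real.exp (-t * x) * (Real.sin (r * t) / t))
    (F' := fun r t => Real.exp (-t * x) * Real.cos (r * t))
    (x₀ := R) (bound := fun t => Real.exp (-x * t)) (Metric.ball_mem_nhds R one_pos)
    (Eventually.of_forall fun r => ((sinc_integrableOn hx r).aestronglyMeasurable))
    (sinc_integrableOn hx R)
    ((expcos_integrableOn hx R).aestronglyMeasurable)
    ?_ ?_ ?_
  · rw [← expcos_integral hx R]
    exact key.2
  · refine Eventually.of_forall fun t => fun r _ => ?_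
    have : ‖Real.exp (-t * x) * Real.cos (r * t)‖ = Real.exp (-t*x) * |Real.cos (r*t)| := by
      rw [norm_mul, Real.norm_eq_abs, Real.norm_eq_abs, Real.abs_exp]
    rw [this, show (-t*x) = (-x*t) by ring]
    calc Real.exp (-x*t) * |Real.cos (r*t)| ≤ Real.exp (-x*t) * 1 :=
      mul_le_mul_of_nonneg_left (Real.abs_cos_le_one _) (Real.exp_pos _).le
    _ = Real.exp (-x*t) := mul_one _
  · have : IntegrableOn (fun t : ℝ => Real.exp (-x * t)) (Ioi 0) :=
      exp_neg_integrableOn_Ioi 0 hx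
    exact this
  · rw [ae_restrict_iff' measurableSet_Ioi]
    refine Eventually.of_forall fun t ht r _ => ?_
    have ht0 : (0:ℝ) < t := ht
    have h1 : HasDerivAt (fun r : ℝ => Real.sin (r * t)) (Real.cos (r * t) * t) r :=
      (hasDerivAt_mul_const t).sin
    have h2 := h1.const_mul (Real.exp (-t * x) / t)
    have e1 : (fun r : ℝ => Real.exp (-t * x) * (Real.sin (r * t) / t))
        = fun r : ℝ => Real.exp (-t * x) / t * Real.sin (r * t) := by
      funext r; ring
    rw [e1]
    refine h2.congr_deriv ?_
    field_simp

lemma F_eq_arctan {x : ℝ} (hx : 0 < x) (R : ℝ) :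
    ∫ t in Ioi (0:ℝ), Real.exp (-t * x) * (Real.sin (R * t) / t) = Real.arctan (R / x) := by
  have harc : ∀ r : ℝ, HasDerivAt (fun r : ℝ => Real.arctan (r / x)) (x / (x^2 + r^2)) r := by
    intro r
    have h1 : HasDerivAt (fun r : ℝ => r / x) (1 / x) r := by
      simpa using (hasDerivAt_id r).div_const x
    have h2 := (Real.hasDerivAt_arctan (r / x)).comp r h1
    refine h2.congr_deriv ?_
    have hD : (0:ℝ) < x^2 + r^2 := by positivity
    field_simp
  set Φ : ℝ → ℝ := fun r =>
    (∫ t in Ioi (0:ℝ), Real.exp (-t * x) * (Real.sin (r * t) / t)) - Real.arctan (r / x) with hΦ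
  have hΦd : ∀ r, HasDerivAt Φ 0 r := by
    intro r
    have h := (F_hasDerivAt hx r).sub (harc r)
    rw [sub_self] at h
    exact h
  have hconst : Φ R = Φ 0 :=
    is_const_of_deriv_eq_zero (fun r => (hΦd r).differentiableAt) (fun r => (hΦd r).deriv) R 0
  have h0 : Φ 0 = 0 := by
    rw [hΦ]
    simp
  have := hconst.trans h0
  rw [hΦ] at this
  linarith [this]

lemma F_tendsto {x : ℝ} (hx : 0 < x) :
    Tendsto (fun R : ℝ => ∫ t in Ioi (0:ℝ), Real.exp (-t * x) * (Real.sin (R * t) / t))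
      atTop (nhds (π / 2)) := by
  have h1 : Tendsto (fun R : ℝ => Real.arctan (R / x)) atTop (nhds (π / 2)) :=
    (Real.tendsto_arctan_atTop.mono_right nhdsWithin_le_nhds).comp
      (tendsto_id.atTop_div_const hx)
  refine h1.congr fun R => (F_eq_arctan hx R).symm

set_option maxHeartbeats 2000000 in
/-- If `f : [0,∞) → ℬ` is `C²` with `‖f(t)‖, ‖f'(t)‖, ‖f''(t)‖ ≤ M e^(a t)`,
then for every `x > a`, `∫₀^∞ e^(-t x) (sin (R t)/t) f(t) dt → (π/2) f(0)` as `R → ∞`. -/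
theorem tendsto_integral_sinc_smul {B : Type*} [NormedAddCommGroup B] [NormedSpace ℝ B]
    [CompleteSpace B] (f : ℝ → B) (a M : ℝ) (ha : 0 ≤ a) (hM : 0 < M)
    (hf : ContDiffOn ℝ 2 f (Set.Ici 0))
    (h0 : ∀ t : ℝ, 0 ≤ t → ‖f t‖ ≤ M * Real.exp (a * t))
    (h1 : ∀ t : ℝ, 0 ≤ t → ‖derivWithin f (Set.Ici 0) t‖ ≤ M * Real.exp (a * t))
    (h2 : ∀ t : ℝ, 0 ≤ t →
      ‖derivWithin (derivWithin f (Set.Ici 0)) (Set.Ici 0) t‖ ≤ M * Real.exp (a * t))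
    (x : ℝ) (hx : a < x) :
    Filter.Tendsto
      (fun R : ℝ =>
        ∫ t in Set.Ioi (0 : ℝ), (Real.exp (-t * x) * (Real.sin (R * t) / t)) • f t)
      Filter.atTop (nhds ((Real.pi / 2) • f 0)) := by
  have hx0 : 0 < x := lt_of_le_of_lt ha hx
  have hk : 0 < x - a := sub_pos.mpr hx
  set f1 : ℝ → B := derivWithin f (Set.Ici 0) with hf1def
  have hfc : ContinuousOn f (Set.Ici 0) := hf.continuousOn
  have hf1c : ContinuousOn f1 (Set.Ici 0) :=
    (hf.derivWithin (uniqueDiffOn_Ici 0) (m := 1) (by norm_num)).continuousOn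
  have hder : ∀ t : ℝ, 0 < t → HasDerivAt f (f1 t) t := fun t ht =>
    ((hf.differentiableOn (by norm_num) t (le_of_lt ht)).hasDerivWithinAt).hasDerivAt
      (Ici_mem_nhds ht)
  -- MVT bound
  have hfd : ∀ t : ℝ, 0 ≤ t → ‖f t - f 0‖ ≤ M * Real.exp (a * t) * t := by
    intro t ht
    have key : ∀ u ∈ Set.Icc (0:ℝ) t, HasDerivWithinAt f (f1 u) (Set.Icc 0 t) u := fun u hu =>
      ((hf.differentiableOn (by norm_num) u hu.1).hasDerivWithinAt).mono
        (fun v hv => hv.1)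
    have hb : ∀ u ∈ Set.Icc (0:ℝ) t, ‖f1 u‖ ≤ M * Real.exp (a * t) := fun u hu =>
      (h1 u hu.1).trans (mul_le_mul_of_nonneg_left
        (Real.exp_le_exp.mpr (mul_le_mul_of_nonneg_left hu.2 ha)) hM.le)
    have := (convex_Icc (0:ℝ) t).norm_image_sub_le_of_norm_hasDerivWithin_le key hb
      (Set.left_mem_Icc.mpr ht) (Set.right_mem_Icc.mpr ht)
    simpa [Real.norm_eq_abs, abs_of_nonneg ht] using this
  -- the remainder kernel φ
  set φ : ℝ → B := fun t => (Real.exp (-t * x) * t⁻¹) • (f t - f 0) with hφdef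
  have hexp_comb : ∀ t : ℝ, Real.exp (-t * x) * Real.exp (a * t) = Real.exp (-(x - a) * t) := by
    intro t; rw [← Real.exp_add]; ring_nf
  have hφb : ∀ t : ℝ, 0 < t → ‖φ t‖ ≤ M * Real.exp (-(x - a) * t) := by
    intro t ht
    have ht' : t ≠ 0 := ne_of_gt ht
    rw [hφdef, norm_smul, Real.norm_eq_abs, abs_mul, Real.abs_exp,
      abs_of_pos (inv_pos.mpr ht)]
    calc Real.exp (-t*x) * t⁻¹ * ‖f t - f 0‖
        ≤ Real.exp (-t*x) * t⁻¹ * (M * Real.exp (a * t) * t) := by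
          gcongr
          exact hfd t ht.le
      _ = M * (Real.exp (-t*x) * Real.exp (a*t)) * (t⁻¹ * t) := by ring
      _ = M * Real.exp (-(x - a) * t) := by rw [inv_mul_cancel₀ ht', hexp_comb t, mul_one]
  have hφc : ContinuousOn φ (Set.Ioi 0) := by
    refine ContinuousOn.smul ?_ (((hfc.mono Ioi_subset_Ici_self)).sub continuousOn_const)
    exact ((Continuous.continuousOn (by fun_prop)).mul
      (continuousOn_id.inv₀ fun t ht => ne_of_gt ht))
  -- integrability of the remainder integrand
  have hTint : ∀ R : ℝ, IntegrableOn (fun t => Real.sin (R * t) • φ t) (Ioi 0) := by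
    intro R
    refine ((exp_neg_integrableOn_Ioi 0 hk).const_mul M).mono' ?_ ?_
    · exact ((Real.continuous_sin.comp (by fun_prop)).continuousOn.smul hφc).aestronglyMeasurable
        measurableSet_Ioi
    · rw [ae_restrict_iff' measurableSet_Ioi]
      refine Eventually.of_forall fun t ht => ?_
      rw [norm_smul, Real.norm_eq_abs]
      calc |Real.sin (R*t)| * ‖φ t‖ ≤ 1 * (M * Real.exp (-(x-a)*t)) := by
            exact mul_le_mul (Real.abs_sin_le_one _) (hφb t ht) (norm_nonneg _) one_pos.le
        _ = M * Real.exp (-(x-a)*t) := one_mul _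
  -- integrability of the main integrand
  have hIint : ∀ R : ℝ,
      IntegrableOn (fun t => (Real.exp (-t*x) * (Real.sin (R*t)/t)) • f t) (Ioi 0) := by
    intro R
    refine ((exp_neg_integrableOn_Ioi 0 hk).const_mul (|R| * M)).mono' ?_ ?_
    · refine ContinuousOn.aestronglyMeasurable ?_ measurableSet_Ioi
      refine ContinuousOn.smul ?_ (hfc.mono Ioi_subset_Ici_self)
      exact (Continuous.continuousOn (by fun_prop)).mul
        (((Real.continuous_sin.comp (by fun_prop)).continuousOn).div continuousOn_id
          fun t ht => ne_of_gt ht)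
    · rw [ae_restrict_iff' measurableSet_Ioi]
      refine Eventually.of_forall fun t ht => ?_
      have ht0 : (0:ℝ) < t := ht
      rw [norm_smul, Real.norm_eq_abs, abs_mul, Real.abs_exp]
      have hsin : |Real.sin (R*t)/t| ≤ |R| := by
        rw [abs_div, abs_of_pos ht0, div_le_iff₀ ht0]
        calc |Real.sin (R * t)| ≤ |R * t| := Real.abs_sin_le_abs
          _ = |R| * t := by rw [abs_mul, abs_of_pos ht0]
      calc Real.exp (-t*x) * |Real.sin (R*t)/t| * ‖f t‖
          ≤ Real.exp (-t*x) * |R| * (M * Real.exp (a*t)) :=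
            mul_le_mul (mul_le_mul_of_nonneg_left hsin (Real.exp_pos _).le)
              (h0 t ht0.le) (norm_nonneg _) (by positivity)
        _ = |R| * M * (Real.exp (-t*x) * Real.exp (a*t)) := by ring
        _ = |R| * M * Real.exp (-(x-a)*t) := by rw [hexp_comb t]
  -- splitting identity
  have hsplit : ∀ R : ℝ,
      (∫ t in Set.Ioi (0:ℝ), (Real.exp (-t*x) * (Real.sin (R*t)/t)) • f t)
      = (∫ t in Set.Ioi (0:ℝ), Real.exp (-t*x) * (Real.sin (R*t)/t)) • f 0
        + ∫ t in Set.Ioi (0:ℝ), Real.sin (R*t) • φ t := by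
    intro R
    rw [← integral_smul_const]
    rw [← integral_add ((sinc_integrableOn hx0 R).smul_const (f 0)) (hTint R)]
    refine setIntegral_congr_fun measurableSet_Ioi fun t ht => ?_
    have ht' : (t:ℝ) ≠ 0 := ne_of_gt (show (0:ℝ) < t from ht)
    have hc : Real.sin (R*t) * (Real.exp (-t*x) * t⁻¹) = Real.exp (-t*x) * (Real.sin (R*t)/t) := by
      field_simp
    rw [hφdef]
    dsimp only
    rw [smul_smul, hc, smul_sub]
    abel
  -- the remainder tends to 0
  have hTtend : Tendsto (fun R : ℝ => ∫ t in Set.Ioi (0:ℝ), Real.sin (R*t) • φ t)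
      atTop (nhds 0) := by
    rw [Metric.tendsto_atTop]
    intro ε hε
    set δ : ℝ := min 1 (ε / (2 * M)) with hδdef
    have hδpos : 0 < δ := lt_min one_pos (by positivity)
    have hδ2 : M * δ ≤ ε / 2 := by
      have : δ ≤ ε / (2 * M) := min_le_right _ _
      calc M * δ ≤ M * (ε / (2*M)) := by gcongr
        _ = ε / 2 := by field_simp
    -- the constant for the tail bound
    set K : ℝ := 2*M*(x*δ⁻¹ + δ⁻¹*δ⁻¹) + M*δ⁻¹ with hKdef
    have hKpos : 0 < K := by positivity
    set J : ℝ := ∫ t in Set.Ioi δ, Real.exp (-(x-a)*t) with hJdef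
    have hJ0 : 0 ≤ J := setIntegral_nonneg measurableSet_Ioi fun t _ => (Real.exp_pos _).le
    set C2 : ℝ := ‖φ δ‖ + K * J with hC2def
    have hC2 : 0 ≤ C2 := add_nonneg (norm_nonneg _) (mul_nonneg hKpos.le hJ0)
    -- derivative of φ
    set φ' : ℝ → B := fun t =>
      (Real.exp (-t*x) * t⁻¹) • f1 t
        + ((-x * Real.exp (-t*x)) * t⁻¹ + Real.exp (-t*x) * (-(t^2)⁻¹)) • (f t - f 0)
      with hφ'def
    have hφder : ∀ t : ℝ, 0 < t → HasDerivAt φ (φ' t) t := by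
      intro t ht
      have ht' : t ≠ 0 := ne_of_gt ht
      have he : HasDerivAt (fun t : ℝ => Real.exp (-t * x)) (-x * Real.exp (-t * x)) t := by
        have h0 : HasDerivAt (fun t : ℝ => -t * x) (-x) t := by
          simpa using ((hasDerivAt_id t).neg.mul_const x)
        simpa [mul_comm] using h0.exp
      have hc : HasDerivAt (fun t : ℝ => Real.exp (-t*x) * t⁻¹)
          ((-x * Real.exp (-t*x)) * t⁻¹ + Real.exp (-t*x) * (-(t^2)⁻¹)) t :=
        he.mul (hasDerivAt_inv ht')
      have hv : HasDerivAt (fun t => f t - f 0) (f1 t) t := (hder t ht).sub_const _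
      exact hc.smul hv
    -- bound on φ' on [δ, ∞)
    have hφ'b : ∀ t : ℝ, δ ≤ t → ‖φ' t‖ ≤ K * Real.exp (-(x-a)*t) := by
      intro t hδt
      have ht0 : 0 < t := lt_of_lt_of_le hδpos hδt
      have htinv : t⁻¹ ≤ δ⁻¹ := by gcongr
      have ht2inv : (t^2)⁻¹ ≤ δ⁻¹ * δ⁻¹ := by
        rw [sq]
        rw [mul_inv]
        gcongr
      have hc'b : |(-x * Real.exp (-t*x)) * t⁻¹ + Real.exp (-t*x) * (-(t^2)⁻¹)|
          ≤ Real.exp (-t*x) * (x*δ⁻¹ + δ⁻¹*δ⁻¹) := by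
        calc |(-x * Real.exp (-t*x)) * t⁻¹ + Real.exp (-t*x) * (-(t^2)⁻¹)|
            ≤ |(-x * Real.exp (-t*x)) * t⁻¹| + |Real.exp (-t*x) * (-(t^2)⁻¹)| := abs_add_le _ _
          _ = Real.exp (-t*x) * (x * t⁻¹) + Real.exp (-t*x) * (t^2)⁻¹ := by
              rw [abs_mul, abs_mul, abs_neg, abs_mul, Real.abs_exp, abs_neg,
                abs_of_pos hx0, abs_of_pos (inv_pos.mpr ht0),
                abs_of_pos (inv_pos.mpr (by positivity : (0:ℝ) < t^2))]
              ring
          _ ≤ Real.exp (-t*x) * (x * δ⁻¹) + Real.exp (-t*x) * (δ⁻¹ * δ⁻¹) := by gcongr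
          _ = Real.exp (-t*x) * (x*δ⁻¹ + δ⁻¹*δ⁻¹) := by ring
      have hsub : ‖f t - f 0‖ ≤ 2 * (M * Real.exp (a*t)) := by
        calc ‖f t - f 0‖ ≤ ‖f t‖ + ‖f 0‖ := norm_sub_le _ _
          _ ≤ M * Real.exp (a*t) + M * Real.exp (a*0) := add_le_add (h0 t ht0.le) (h0 0 le_rfl)
          _ ≤ M * Real.exp (a*t) + M * Real.exp (a*t) :=
              add_le_add le_rfl (mul_le_mul_of_nonneg_left
                (Real.exp_le_exp.mpr (by nlinarith [mul_nonneg ha ht0.le])) hM.le)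
          _ = 2 * (M * Real.exp (a*t)) := by ring
      have hcb : |Real.exp (-t*x) * t⁻¹| ≤ Real.exp (-t*x) * δ⁻¹ := by
        rw [abs_mul, Real.abs_exp, abs_of_pos (inv_pos.mpr ht0)]
        gcongr
      calc ‖φ' t‖ ≤ ‖(Real.exp (-t*x) * t⁻¹) • f1 t‖
            + ‖((-x * Real.exp (-t*x)) * t⁻¹ + Real.exp (-t*x) * (-(t^2)⁻¹)) • (f t - f 0)‖ :=
            norm_add_le _ _
        _ = |Real.exp (-t*x) * t⁻¹| * ‖f1 t‖
            + |(-x * Real.exp (-t*x)) * t⁻¹ + Real.exp (-t*x) * (-(t^2)⁻¹)| * ‖f t - f 0‖ := by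
            rw [norm_smul, norm_smul]; rfl
        _ ≤ (Real.exp (-t*x) * δ⁻¹) * (M * Real.exp (a*t))
            + (Real.exp (-t*x) * (x*δ⁻¹ + δ⁻¹*δ⁻¹)) * (2 * (M * Real.exp (a*t))) := by
            refine add_le_add (mul_le_mul hcb (h1 t ht0.le) (norm_nonneg _) (by positivity))
              (mul_le_mul hc'b hsub (norm_nonneg _) (by positivity))
        _ = K * (Real.exp (-t*x) * Real.exp (a*t)) := by rw [hKdef]; ring
        _ = K * Real.exp (-(x-a)*t) := by rw [hexp_comb t]
    -- continuity of φ' on (0, ∞)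
    have hφ'c : ContinuousOn φ' (Set.Ioi 0) := by
      refine ContinuousOn.add
        (ContinuousOn.smul ?_ (hf1c.mono Ioi_subset_Ici_self))
        (ContinuousOn.smul ?_
          ((hfc.mono Ioi_subset_Ici_self).sub continuousOn_const))
      · exact (Continuous.continuousOn (by fun_prop)).mul
          (continuousOn_id.inv₀ fun t ht => ne_of_gt ht)
      · refine ContinuousOn.add ((Continuous.continuousOn (by fun_prop)).mul
          (continuousOn_id.inv₀ fun t ht => ne_of_gt ht)) ?_
        refine (Continuous.continuousOn (by fun_prop)).mul ((ContinuousOn.inv₀ ?_ ?_).neg)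
        · fun_prop
        · exact fun t ht => ne_of_gt (pow_pos ht 2)
    have hφ'int : IntegrableOn φ' (Set.Ioi δ) := by
      refine ((exp_neg_integrableOn_Ioi δ hk).const_mul K).mono' ?_ ?_
      · exact (hφ'c.mono (Ioi_subset_Ioi hδpos.le)).aestronglyMeasurable measurableSet_Ioi
      · rw [ae_restrict_iff' measurableSet_Ioi]
        exact Eventually.of_forall fun t ht => hφ'b t (le_of_lt ht)
    -- tail bound via integration by parts
    have htail : ∀ R : ℝ, 1 ≤ R →
        ‖∫ t in Set.Ioi δ, Real.sin (R*t) • φ t‖ ≤ C2 / R := by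
      intro R hR
      have hR0 : 0 < R := lt_of_lt_of_le one_pos hR
      have hR' : R ≠ 0 := ne_of_gt hR0
      set H : ℝ → B := fun t => (-Real.cos (R*t) / R) • φ t with hHdef
      have hHder : ∀ t : ℝ, 0 < t →
          HasDerivAt H ((-Real.cos (R*t)/R) • φ' t + Real.sin (R*t) • φ t) t := by
        intro t ht
        have hu : HasDerivAt (fun t : ℝ => -Real.cos (R*t)/R) (Real.sin (R*t)) t := by
          have hRt : HasDerivAt (fun t : ℝ => R * t) R t := by
            simpa using (hasDerivAt_id t).const_mul R
          have h2 := hRt.cos.neg.div_const R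
          refine h2.congr_deriv ?_
          field_simp
        exact hu.smul (hφder t ht)
      have hHtend : Tendsto H atTop (nhds 0) := by
        have h1' : Tendsto (fun t : ℝ => (R⁻¹ * M) * Real.exp (-(x-a) * t)) atTop (nhds 0) := by
          have h := Real.tendsto_exp_neg_atTop_nhds_zero.comp
            (tendsto_id.const_mul_atTop (l := atTop) hk)
          have h2 := h.const_mul (R⁻¹ * M)
          rw [mul_zero] at h2
          refine h2.congr fun t => ?_
          simp only [Function.comp_apply, id_eq, neg_mul]
        refine squeeze_zero_norm' ?_ h1'
        filter_upwards [eventually_gt_atTop (0:ℝ)] with t ht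
        rw [hHdef]
        dsimp only
        rw [norm_smul, Real.norm_eq_abs, abs_div, abs_neg, abs_of_pos hR0]
        calc |Real.cos (R*t)| / R * ‖φ t‖ ≤ 1 / R * (M * Real.exp (-(x-a)*t)) := by
              refine mul_le_mul ?_ (hφb t ht) (norm_nonneg _) (by positivity)
              gcongr
              exact Real.abs_cos_le_one _
          _ = (R⁻¹ * M) * Real.exp (-(x-a)*t) := by rw [one_div]; ring
      have int1 : IntegrableOn (fun t => Real.sin (R*t) • φ t) (Set.Ioi δ) :=
        (hTint R).mono_set (Ioi_subset_Ioi hδpos.le)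
      have int2 : IntegrableOn (fun t => (-Real.cos (R*t)/R) • φ' t) (Set.Ioi δ) := by
        refine ((exp_neg_integrableOn_Ioi δ hk).const_mul K).mono' ?_ ?_
        · exact (((Continuous.continuousOn (by fun_prop)).smul
            (hφ'c.mono (Ioi_subset_Ioi hδpos.le)))).aestronglyMeasurable measurableSet_Ioi
        · rw [ae_restrict_iff' measurableSet_Ioi]
          refine Eventually.of_forall fun t ht => ?_
          rw [norm_smul, Real.norm_eq_abs, abs_div, abs_neg, abs_of_pos hR0]
          calc |Real.cos (R*t)| / R * ‖φ' t‖ ≤ 1 * ‖φ' t‖ := by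
                refine mul_le_mul ?_ le_rfl (norm_nonneg _) one_pos.le
                rw [div_le_one hR0]
                exact (Real.abs_cos_le_one _).trans hR
            _ = ‖φ' t‖ := one_mul _
            _ ≤ K * Real.exp (-(x-a)*t) := hφ'b t (le_of_lt ht)
      have key := integral_Ioi_of_hasDerivAt_of_tendsto (a := δ)
        ((hHder δ hδpos).continuousAt.continuousWithinAt)
        (fun t ht => hHder t (lt_trans hδpos ht)) (int2.add int1) hHtend
      rw [integral_add int2 int1] at key
      have heq : (∫ t in Set.Ioi δ, Real.sin (R*t) • φ t)
          = (0 - H δ) - ∫ t in Set.Ioi δ, (-Real.cos (R*t)/R) • φ' t := by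
        rw [← key]; abel
      rw [heq]
      have hHδ : ‖H δ‖ ≤ ‖φ δ‖ / R := by
        rw [hHdef]
        dsimp only
        rw [norm_smul, Real.norm_eq_abs, abs_div, abs_neg, abs_of_pos hR0, div_mul_eq_mul_div]
        gcongr
        calc |Real.cos (R*δ)| * ‖φ δ‖ ≤ 1 * ‖φ δ‖ :=
            mul_le_mul_of_nonneg_right (Real.abs_cos_le_one _) (norm_nonneg _)
          _ = ‖φ δ‖ := one_mul _
      have hB : ‖∫ t in Set.Ioi δ, (-Real.cos (R*t)/R) • φ' t‖ ≤ R⁻¹ * (K * J) := by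
        have hgint : Integrable (fun t => R⁻¹ * (K * Real.exp (-(x-a)*t)))
            (volume.restrict (Set.Ioi δ)) :=
          (((exp_neg_integrableOn_Ioi δ hk).const_mul K).const_mul R⁻¹)
        have hbnd : ∀ᵐ t ∂(volume.restrict (Set.Ioi δ)),
            ‖(-Real.cos (R*t)/R) • φ' t‖ ≤ R⁻¹ * (K * Real.exp (-(x-a)*t)) := by
          rw [ae_restrict_iff' measurableSet_Ioi]
          refine Eventually.of_forall fun t ht => ?_
          rw [norm_smul, Real.norm_eq_abs, abs_div, abs_neg, abs_of_pos hR0]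
          calc |Real.cos (R*t)| / R * ‖φ' t‖
              ≤ 1 / R * (K * Real.exp (-(x-a)*t)) := by
                refine mul_le_mul ?_ (hφ'b t (le_of_lt ht)) (norm_nonneg _) (by positivity)
                gcongr
                exact Real.abs_cos_le_one _
            _ = R⁻¹ * (K * Real.exp (-(x-a)*t)) := by rw [one_div]
        calc ‖∫ t in Set.Ioi δ, (-Real.cos (R*t)/R) • φ' t‖
            ≤ ∫ t in Set.Ioi δ, R⁻¹ * (K * Real.exp (-(x-a)*t)) :=
              norm_integral_le_of_norm_le hgint hbnd
          _ = R⁻¹ * ∫ t in Set.Ioi δ, K * Real.exp (-(x-a)*t) := integral_const_mul _ _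
          _ = R⁻¹ * (K * J) := by rw [integral_const_mul, hJdef]
      calc ‖(0 - H δ) - ∫ t in Set.Ioi δ, (-Real.cos (R*t)/R) • φ' t‖
          ≤ ‖0 - H δ‖ + ‖∫ t in Set.Ioi δ, (-Real.cos (R*t)/R) • φ' t‖ := norm_sub_le _ _
        _ ≤ ‖φ δ‖ / R + R⁻¹ * (K * J) := by
            rw [zero_sub, norm_neg]
            exact add_le_add hHδ hB
        _ = C2 / R := by rw [hC2def]; ring
    -- small interval bound
    have hsmall : ∀ R : ℝ, ‖∫ t in Set.Ioc (0:ℝ) δ, Real.sin (R*t) • φ t‖ ≤ M * δ := by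
      intro R
      have hb : ∀ t ∈ Set.Ioc (0:ℝ) δ, ‖Real.sin (R*t) • φ t‖ ≤ M := by
        intro t ht
        rw [norm_smul, Real.norm_eq_abs]
        calc |Real.sin (R*t)| * ‖φ t‖ ≤ 1 * (M * Real.exp (-(x-a)*t)) :=
            mul_le_mul (Real.abs_sin_le_one _) (hφb t ht.1) (norm_nonneg _) one_pos.le
          _ = M * Real.exp (-(x-a)*t) := one_mul _
          _ ≤ M * 1 := by
              gcongr
              exact Real.exp_le_one_iff.mpr (by nlinarith [ht.1.le, hk.le])
          _ = M := mul_one _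
      have := norm_setIntegral_le_of_norm_le_const (μ := volume)
        (s := Set.Ioc (0:ℝ) δ) (C := M) measure_Ioc_lt_top
        hb
      calc ‖∫ t in Set.Ioc (0:ℝ) δ, Real.sin (R*t) • φ t‖
          ≤ M * (volume (Set.Ioc (0:ℝ) δ)).toReal := this
        _ = M * δ := by rw [Real.volume_Ioc, sub_zero, ENNReal.toReal_ofReal hδpos.le]
    -- choose N
    refine ⟨max 1 ((2/ε) * C2 + 1), fun R hRN => ?_⟩
    have hR1 : 1 ≤ R := le_trans (le_max_left _ _) hRN
    have hR0 : 0 < R := lt_of_lt_of_le one_pos hR1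
    have hRC : (2/ε) * C2 + 1 ≤ R := le_trans (le_max_right _ _) hRN
    have hC2R : C2 / R < ε / 2 := by
      rw [div_lt_div_iff₀ hR0 two_pos]
      have : ε * ((2/ε) * C2 + 1) ≤ ε * R := mul_le_mul_of_nonneg_left hRC hε.le
      have heq2 : ε * ((2/ε) * C2 + 1) = 2 * C2 + ε := by field_simp <;> ring
      nlinarith
    have hdecomp : (∫ t in Set.Ioi (0:ℝ), Real.sin (R*t) • φ t)
        = (∫ t in Set.Ioc (0:ℝ) δ, Real.sin (R*t) • φ t)
          + ∫ t in Set.Ioi δ, Real.sin (R*t) • φ t := by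
      rw [← setIntegral_union (Set.Ioc_disjoint_Ioi le_rfl) measurableSet_Ioi
        (((hTint R).mono_set Set.Ioc_subset_Ioi_self))
        ((hTint R).mono_set (Ioi_subset_Ioi hδpos.le)),
        Set.Ioc_union_Ioi_eq_Ioi hδpos.le]
    rw [dist_eq_norm, sub_zero, hdecomp]
    calc ‖(∫ t in Set.Ioc (0:ℝ) δ, Real.sin (R*t) • φ t)
          + ∫ t in Set.Ioi δ, Real.sin (R*t) • φ t‖
        ≤ ‖∫ t in Set.Ioc (0:ℝ) δ, Real.sin (R*t) • φ t‖
          + ‖∫ t in Set.Ioi δ, Real.sin (R*t) • φ t‖ := norm_add_le _ _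
      _ ≤ M * δ + C2 / R := add_le_add (hsmall R) (htail R hR1)
      _ < ε / 2 + ε / 2 := by
          have := hδ2
          have := hC2R
          linarith
      _ = ε := by ring
  -- assemble
  refine Filter.Tendsto.congr (fun R => (hsplit R).symm) ?_
  have := ((F_tendsto hx0).smul_const (f 0)).add hTtend
  simpa using this

end SincAux
end

section
/- Let Q be an entire function of order strictly less than 1/2 which is bounded on the positive real half-line [0,∞). Then Q is constant. -/
/-- An entire function of order strictly less than `1/2` (i.e. `‖Q z‖ ≤ C exp(‖z‖^ρ)`
for some `ρ < 1/2`) which is bounded on `[0,∞)` is constant (Phragmén–Lindelöf). -/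
theorem entire_order_lt_half_bounded_on_halfline_const (Q : ℂ → ℂ)
    (hQ : Differentiable ℂ Q)
    (horder : ∃ ρ C : ℝ, 0 ≤ ρ ∧ ρ < 1 / 2 ∧ 0 < C ∧
      ∀ z : ℂ, ‖Q z‖ ≤ C * Real.exp (‖z‖ ^ ρ))
    (hbdd : ∃ Bd : ℝ, ∀ x : ℝ, 0 ≤ x → ‖Q (x : ℂ)‖ ≤ Bd) :
    ∀ z w : ℂ, Q z = Q w := by
  obtain ⟨ρ, C, hρ0, hρ, hC, hbound⟩ := horder
  obtain ⟨Bd, hBd⟩ := hbdd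
  have hexp_re : ∀ z : ℂ, z.im = 0 ∨ z.im = 2 * Real.pi →
      Complex.exp z = (Real.exp z.re : ℂ) := by
    intro z hz
    rw [Complex.exp_eq_exp_re_mul_sin_add_cos]
    rcases hz with hz | hz
    · rw [hz]; push_cast; simp
    · rw [hz, ← Complex.ofReal_cos, ← Complex.ofReal_sin, Real.cos_two_pi, Real.sin_two_pi]
      simp
  -- Apply Phragmén–Lindelöf to `Q ∘ exp` on the strip `0 ≤ im ≤ 2π`.
  have key : ∀ w : ℂ, 0 ≤ w.im → w.im ≤ 2 * Real.pi → ‖Q (Complex.exp w)‖ ≤ Bd := by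
    intro w hw0 hw2
    refine PhragmenLindelof.horizontal_strip (f := fun w => Q (Complex.exp w))
      (a := 0) (b := 2 * Real.pi)
      ((hQ.comp Complex.differentiable_exp).diffContOnCl) ?_ ?_ ?_ hw0 hw2
    · refine ⟨ρ, ?_, 1, ?_⟩
      · rw [sub_zero, div_mul_eq_div_div_swap, div_self Real.pi_ne_zero]
        exact hρ
      · refine Asymptotics.IsBigO.of_bound C ?_
        filter_upwards with z
        have h1 : ‖Q (Complex.exp z)‖ ≤ C * Real.exp (‖Complex.exp z‖ ^ ρ) := hbound _
        have h2 : ‖Complex.exp z‖ ^ ρ ≤ Real.exp (ρ * |z.re|) := by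
          rw [Complex.norm_exp, ← Real.exp_one_rpow z.re,
            ← Real.rpow_mul (Real.exp_pos 1).le, Real.exp_one_rpow]
          exact Real.exp_le_exp.2 (by
            calc z.re * ρ ≤ |z.re| * ρ := by
                  have := le_abs_self z.re; nlinarith
              _ = ρ * |z.re| := mul_comm _ _)
        have h3 : Real.exp (‖Complex.exp z‖ ^ ρ) ≤ Real.exp (Real.exp (ρ * |z.re|)) :=
          Real.exp_le_exp.2 h2
        calc ‖Q (Complex.exp z)‖ ≤ C * Real.exp (Real.exp (ρ * |z.re|)) := by nlinarith
          _ = C * ‖Real.exp (1 * Real.exp (ρ * |z.re|))‖ := by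
              rw [one_mul, Real.norm_eq_abs, abs_of_pos (Real.exp_pos _)]
    · intro z hz
      show ‖Q (Complex.exp z)‖ ≤ Bd
      rw [hexp_re z (Or.inl hz)]
      exact hBd _ (Real.exp_pos _).le
    · intro z hz
      show ‖Q (Complex.exp z)‖ ≤ Bd
      rw [hexp_re z (Or.inr hz)]
      exact hBd _ (Real.exp_pos _).le
  -- Hence `Q` is bounded everywhere, so constant by Liouville.
  have hb : ∀ z : ℂ, ‖Q z‖ ≤ max Bd ‖Q 0‖ := by
    intro z
    rcases eq_or_ne z 0 with rfl | hz
    · exact le_max_right _ _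
    · obtain ⟨w, hw, h0, h2⟩ : ∃ w : ℂ, Complex.exp w = z ∧ 0 ≤ w.im ∧ w.im ≤ 2 * Real.pi := by
        rcases le_or_gt 0 (Complex.log z).im with h | h
        · exact ⟨Complex.log z, Complex.exp_log hz, h,
            (Complex.log_im_le_pi z).trans (by linarith [Real.pi_pos])⟩
        · refine ⟨Complex.log z + 2 * Real.pi * Complex.I, ?_, ?_, ?_⟩
          · rw [Complex.exp_add, Complex.exp_log hz, Complex.exp_two_pi_mul_I, mul_one]
          · simp only [Complex.add_im, Complex.mul_im, Complex.mul_re, Complex.I_im,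
              Complex.I_re]
            have := Complex.neg_pi_lt_log_im z
            simp
            nlinarith [Real.pi_pos]
          · simp only [Complex.add_im]
            have h2π : ((2 * Real.pi : ℝ) * Complex.I : ℂ).im = 2 * Real.pi := by simp
            push_cast at h2π ⊢
            rw [h2π]
            linarith
      rw [← hw]
      exact (key w h0 h2).trans (le_max_left _ _)
  intro z w
  refine hQ.apply_eq_apply_of_bounded ?_ z w
  refine Metric.isBounded_closedBall (x := (0:ℂ)) (r := max Bd ‖Q 0‖) |>.subset ?_
  rintro y ⟨x, rfl⟩
  simpa [Metric.mem_closedBall, Complex.dist_eq] using hb x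
end
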